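/- (Davis's weak structure theorem.) Let G be a simple graph on a finite vertex set V with a symmetric edge sign function σ with values in {+1, −1}. Then there exists a clustering of the vertices, i.e., a function f : V → C into some set of clusters such that every positive edge joins two vertices with f(u) = f(v) and every negative edge joins vertices with f(u) ≠ f(v), if and only if G contains no cycle with exactly one negative edge. -/

import Mathlib

universe u

lemma davis_walk_aux {V : Type u} {G : SimpleGraph V} (σ : V → V → ℤ)
    (hsign : ∀ u v, G.Adj u v → σ u v = 1 ∨ σ u v = -1)
    {C : Type u} (f : V → C)
    (hpos : ∀ u v, G.Adj u v → σ u v = 1 → f u = f v)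
    (hneg : ∀ u v, G.Adj u v → σ u v = -1 → f u ≠ f v)
    {a b : V} (w : G.Walk a b) :
    (((w.darts.map fun d => σ d.fst d.snd).count (-1) = 0 → f a = f b) ∧
     ((w.darts.map fun d => σ d.fst d.snd).count (-1) = 1 → f a ≠ f b)) := by
  induction w with
  | nil => simp
  | @cons a x b h p ih =>
    simp only [SimpleGraph.Walk.darts_cons, List.map_cons, List.count_cons]
    rcases hsign a x h with hs | hs
    · have hfx : f a = f x := hpos a x h hs
      simp only [hs]
      norm_num
      exact ⟨fun h0 => hfx.trans (ih.1 h0), fun h1 => hfx ▸ ih.2 h1⟩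
    · have hfx : f a ≠ f x := hneg a x h hs
      simp only [hs]
      norm_num
      intro h0
      have := ih.1 h0
      rw [← this]
      exact hfx

lemma davis_pos_walk {V : Type u} {G H : SimpleGraph V} (σ : V → V → ℤ)
    (hHG : ∀ u v, H.Adj u v → G.Adj u v ∧ σ u v = 1)
    {a b : V} (q : H.Walk a b) :
    ∃ p : G.Walk a b, ∀ d ∈ p.darts, σ d.fst d.snd = 1 := by
  induction q with
  | nil => exact ⟨SimpleGraph.Walk.nil, by simp⟩
  | @cons a x b hax p ih =>
    obtain ⟨p', hp'⟩ := ih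
    refine ⟨SimpleGraph.Walk.cons (hHG a x hax).1 p', ?_⟩
    intro d hd
    rw [SimpleGraph.Walk.darts_cons, List.mem_cons] at hd
    rcases hd with rfl | hd
    · exact (hHG a x hax).2
    · exact hp' d hd

/-- Davis's weak structure theorem: a signed graph admits a clustering `f : V → C`
(positive edges inside clusters, negative edges between distinct clusters) if and only if
it contains no cycle with exactly one negative edge. -/
theorem davis_weak_structure {V : Type u} [Fintype V]
    (G : SimpleGraph V) (σ : V → V → ℤ)
    (hsymm : ∀ u v, G.Adj u v → σ u v = σ v u)
    (hsign : ∀ u v, G.Adj u v → σ u v = 1 ∨ σ u v = -1) :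
    (∃ (C : Type u) (f : V → C),
      (∀ u v, G.Adj u v → σ u v = 1 → f u = f v) ∧
      (∀ u v, G.Adj u v → σ u v = -1 → f u ≠ f v)) ↔
      ¬∃ (u : V) (w : G.Walk u u), w.IsCycle ∧
        ((w.darts.map fun d => σ d.fst d.snd).count (-1)) = 1 := by
  constructor
  · rintro ⟨C, f, hpos, hneg⟩ ⟨u, w, _, hcount⟩
    exact (davis_walk_aux σ hsign f hpos hneg w).2 hcount rfl
  · intro hnc
    haveI := Classical.decEq V
    -- positive subgraph
    set H : SimpleGraph V :=
      { Adj := fun u v => G.Adj u v ∧ σ u v = 1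
        symm := by
          constructor
          intro u v ⟨hadj, hs⟩
          exact ⟨hadj.symm, (hsymm u v hadj) ▸ hs⟩
        loopless := ⟨fun v h => G.loopless.irrefl v h.1⟩ } with hH
    refine ⟨H.ConnectedComponent, H.connectedComponentMk, ?_, ?_⟩
    · intro u v hadj hs
      exact SimpleGraph.ConnectedComponent.sound
        (SimpleGraph.Adj.reachable (show H.Adj u v from ⟨hadj, hs⟩))
    · intro u v hadj hs hfeq
      have hreach : H.Reachable u v := SimpleGraph.ConnectedComponent.exact hfeq
      obtain ⟨q⟩ := hreach.symm
      -- build a G-walk from v to u all of whose darts are positive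
      have hwalk : ∃ p : G.Walk v u, ∀ d ∈ p.darts, σ d.fst d.snd = 1 :=
        davis_pos_walk σ (fun _ _ h => h) q
      obtain ⟨p, hp⟩ := hwalk
      have hbd : ∀ d ∈ p.bypass.darts, σ d.fst d.snd = 1 :=
        fun d hd => hp d (p.darts_bypass_subset hd)
      have hne : s(u, v) ∉ p.bypass.edges := by
        intro hmem
        rw [SimpleGraph.Walk.edges, List.mem_map] at hmem
        obtain ⟨d, hd, hde⟩ := hmem
        have h1 := hbd d hd
        rw [SimpleGraph.dart_edge_eq_mk'_iff'] at hde
        rcases hde with ⟨h2, h3⟩ | ⟨h2, h3⟩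
        · rw [h2, h3, hs] at h1; norm_num at h1
        · rw [h2, h3, ← hsymm u v hadj, hs] at h1; norm_num at h1
      have hcycle : (SimpleGraph.Walk.cons hadj p.bypass).IsCycle :=
        SimpleGraph.Path.cons_isCycle ⟨p.bypass, p.bypass_isPath⟩ hadj hne
      apply hnc
      refine ⟨u, SimpleGraph.Walk.cons hadj p.bypass, hcycle, ?_⟩
      simp only [SimpleGraph.Walk.darts_cons, List.map_cons, List.count_cons]
      have h0 : (p.bypass.darts.map fun d => σ d.fst d.snd).count (-1) = 0 := by
        rw [List.count_eq_zero]
        intro hmem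
        rw [List.mem_map] at hmem
        obtain ⟨d, hd, hde⟩ := hmem
        rw [hbd d hd] at hde
        norm_num at hde
      rw [h0, hs]
      norm_num
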